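/- There exists a subset E of 2^ω × 2^ω which is the union of a closed set and an open set (i.e., the complement of a difference of two open sets), all of whose vertical sections E_x = {y : (x,y) ∈ E} are clopen in 2^ω, yet E is not a countable union of rectangles of the form F × S with F a closed subset of 2^ω and S an arbitrary subset of 2^ω. -/

import Mathlib

open Filter Topology Set Classical

noncomputable section
open scoped Classical

/-- A set is Fσ if it is a countable union of closed sets. -/
def IsFsigma {X : Type*} [TopologicalSpace X] (s : Set X) : Prop :=
  ∃ F : ℕ → Set X, (∀ n, IsClosed (F n)) ∧ s = ⋃ n, F n

/-- A function is Baire class one if the preimage of every open set is Fσ. -/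
def BaireClassOneFn {X Y : Type*} [TopologicalSpace X] [TopologicalSpace Y] (f : X → Y) : Prop :=
  ∀ U : Set Y, IsOpen U → IsFsigma (f ⁻¹' U)

/-- A countable basis `(W m)` is good if for every open `U` and `x ∈ U` there is `m₀`
such that for all `m ≥ m₀`, `x ∈ W m` implies `W m ⊆ U`. -/
def IsGoodBasis {X : Type*} [TopologicalSpace X] (W : ℕ → Set X) : Prop :=
  TopologicalSpace.IsTopologicalBasis (Set.range W) ∧
  ∀ U : Set X, IsOpen U → ∀ x ∈ U, ∃ m₀, ∀ m ≥ m₀, x ∈ W m → W m ⊆ U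

/-- The path to `x` based on the dense sequence `D`, relative to the good basis `W`. -/
noncomputable def pathSeq {X : Type*} (W : ℕ → Set X) (D : ℕ → X) (x : X) : ℕ → X
  | 0 => D 0
  | n + 1 =>
    if x = pathSeq W D x n then pathSeq W D x n
    else D (sInf {p | ∃ m, x ∈ W m ∧ D p ∈ W m ∧ ∀ k, k ≤ n → pathSeq W D x k ∉ W m})
  termination_by n => n
  decreasing_by all_goals omega

/-- `f` is recoverable with respect to `D` (and the good basis `W`). -/
def RecoverableWith {X Y : Type*} [TopologicalSpace Y] (W : ℕ → Set X) (D : ℕ → X)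
    (f : X → Y) : Prop :=
  ∀ x : X, Tendsto (fun n => f (pathSeq W D x n)) atTop (𝓝 (f x))

private lemma cyl_clopen (m : ℕ) (P : (ℕ → Bool) → Prop)
    (h : ∀ y z : ℕ → Bool, (∀ j, j < m → y j = z j) → P y → P z) :
    IsClopen {y : ℕ → Bool | P y} := by
  have hr : Continuous (fun y : ℕ → Bool => (fun i : Fin m => y i.1)) :=
    continuous_pi fun i => continuous_apply _
  have heq : {y : ℕ → Bool | P y} =
      (fun y : ℕ → Bool => (fun i : Fin m => y i.1)) ⁻¹'
        {g : Fin m → Bool | P (fun j => if hj : j < m then g ⟨j, hj⟩ else false)} := by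
    ext y
    simp only [Set.mem_setOf_eq, Set.mem_preimage]
    constructor
    · intro hy
      exact h y _ (fun j hj => by simp [hj]) hy
    · intro hy
      exact h _ y (fun j hj => by simp [hj]) hy
  rw [heq]
  exact (isClopen_discrete _).preimage hr

private lemma cyl_clopen2 (m : ℕ) (P : (ℕ → Bool) × (ℕ → Bool) → Prop)
    (h : ∀ p q : (ℕ → Bool) × (ℕ → Bool),
      (∀ j, j < m → p.1 j = q.1 j) → (∀ j, j < m → p.2 j = q.2 j) → P p → P q) :
    IsClopen {p : (ℕ → Bool) × (ℕ → Bool) | P p} := by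
  have hr : Continuous (fun p : (ℕ → Bool) × (ℕ → Bool) =>
      ((fun i : Fin m => p.1 i.1, fun i : Fin m => p.2 i.1) :
        (Fin m → Bool) × (Fin m → Bool))) := by
    refine Continuous.prodMk ?_ ?_
    · exact continuous_pi fun i => (continuous_apply (i.1 : ℕ)).comp continuous_fst
    · exact continuous_pi fun i => (continuous_apply (i.1 : ℕ)).comp continuous_snd
  have heq : {p : (ℕ → Bool) × (ℕ → Bool) | P p} =
      (fun p : (ℕ → Bool) × (ℕ → Bool) =>
        ((fun i : Fin m => p.1 i.1, fun i : Fin m => p.2 i.1) :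
          (Fin m → Bool) × (Fin m → Bool))) ⁻¹'
      {g : (Fin m → Bool) × (Fin m → Bool) |
        P (fun j => if hj : j < m then g.1 ⟨j, hj⟩ else false,
           fun j => if hj : j < m then g.2 ⟨j, hj⟩ else false)} := by
    ext p
    simp only [Set.mem_setOf_eq, Set.mem_preimage]
    constructor
    · intro hp
      exact h p _ (fun j hj => by simp [hj]) (fun j hj => by simp [hj]) hp
    · intro hp
      exact h _ p (fun j hj => by simp [hj]) (fun j hj => by simp [hj]) hp
  rw [heq]
  exact (isClopen_discrete _).preimage hr

private lemma exists_cyl {O : Set (ℕ → Bool)} (hO : IsOpen O) {x : ℕ → Bool} (hx : x ∈ O) :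
    ∃ p : ℕ, ∀ y : ℕ → Bool, (∀ j, j < p → y j = x j) → y ∈ O := by
  obtain ⟨I, u, hIu, hsub⟩ := isOpen_pi_iff.mp hO x hx
  refine ⟨(I.sup id) + 1, fun y hy => hsub ?_⟩
  rw [Set.mem_pi]
  intro a ha
  have ha' : a < I.sup id + 1 := Nat.lt_succ_of_le (Finset.le_sup (f := id) ha)
  rw [hy a ha']
  exact (hIu a ha).2

private lemma last_unique {x : ℕ → Bool} {k k' : ℕ} (h1 : x k = true)
    (h2 : ∀ j, k < j → x j = false) (h3 : x k' = true) (h4 : ∀ j, k' < j → x j = false) :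
    k = k' := by
  rcases lt_trichotomy k k' with h | h | h
  · rw [h2 k' h] at h3; exact absurd h3 (by simp)
  · exact h
  · rw [h4 k h] at h1; exact absurd h1 (by simp)

private lemma meagre_of_closed_nwd {s : Set (ℕ → Bool)} (hc : IsClosed s)
    (hi : interior s = ∅) : IsMeagre s := by
  rw [IsMeagre]
  apply residual_of_dense_open hc.isOpen_compl
  exact interior_eq_empty_iff_dense_compl.mp hi


/-- There is a subset `E` of `2^ω × 2^ω` which is the union of a closed set and an open set,
all of whose vertical sections are clopen, but which is not a countable union of rectangles
`F × S` with `F` closed and `S` arbitrary. -/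
theorem exists_closedUnionOpen_clopenSections_not_sigmaClosedRectangles :
    ∃ E : Set ((ℕ → Bool) × (ℕ → Bool)),
      (∃ (C U : Set ((ℕ → Bool) × (ℕ → Bool))), IsClosed C ∧ IsOpen U ∧ E = C ∪ U) ∧
      (∀ x : ℕ → Bool, IsClopen {y | (x, y) ∈ E}) ∧
      ¬ (∃ (F : ℕ → Set (ℕ → Bool)) (S : ℕ → Set (ℕ → Bool)),
          (∀ n, IsClosed (F n)) ∧ E = ⋃ n, F n ×ˢ S n) := by
  classical
  set E : Set ((ℕ → Bool) × (ℕ → Bool)) :=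
    {p | ¬ ∃ k, p.1 k = true ∧ (∀ j, k < j → p.1 j = false) ∧
        (∀ j, j < k → p.2 j = p.1 j) ∧ p.2 k = false} with hEdef
  have hmemE : ∀ p : (ℕ → Bool) × (ℕ → Bool), p ∈ E ↔
      ¬ ∃ k, p.1 k = true ∧ (∀ j, k < j → p.1 j = false) ∧
        (∀ j, j < k → p.2 j = p.1 j) ∧ p.2 k = false := fun p => Iff.rfl
  refine ⟨E, ?_, ?_, ?_⟩
  · -- E = C ∪ U
    refine ⟨{p | ¬ ∃ k, (∀ j, j < k → p.2 j = p.1 j) ∧ p.1 k = true ∧ p.2 k = false},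
      ⋃ k, ⋃ k', {p | k < k' ∧ (∀ j, j < k → p.2 j = p.1 j) ∧ p.1 k = true ∧
        p.2 k = false ∧ p.1 k' = true}, ?_, ?_, ?_⟩
    · -- C closed
      rw [← isOpen_compl_iff]
      have hco : {p : (ℕ → Bool) × (ℕ → Bool) |
          ¬ ∃ k, (∀ j, j < k → p.2 j = p.1 j) ∧ p.1 k = true ∧ p.2 k = false}ᶜ =
          ⋃ k, {p : (ℕ → Bool) × (ℕ → Bool) |
            (∀ j, j < k → p.2 j = p.1 j) ∧ p.1 k = true ∧ p.2 k = false} := by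
        ext p
        simp only [Set.mem_compl_iff, Set.mem_setOf_eq, not_not, Set.mem_iUnion]
      rw [hco]
      refine isOpen_iUnion fun k => (cyl_clopen2 (k + 1) _ ?_).isOpen
      intro p q h1 h2 hp
      refine ⟨fun j hj => ?_, ?_, ?_⟩
      · rw [← h1 j (by omega), ← h2 j (by omega)]; exact hp.1 j hj
      · rw [← h1 k (by omega)]; exact hp.2.1
      · rw [← h2 k (by omega)]; exact hp.2.2
    · -- U open
      refine isOpen_iUnion fun k => isOpen_iUnion fun k' =>
        (cyl_clopen2 (k + k' + 2) _ ?_).isOpen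
      intro p q h1 h2 hp
      obtain ⟨hkk', hag, hk1, hk2, hk'1⟩ := hp
      refine ⟨hkk', fun j hj => ?_, ?_, ?_, ?_⟩
      · rw [← h1 j (by omega), ← h2 j (by omega)]; exact hag j hj
      · rw [← h1 k (by omega)]; exact hk1
      · rw [← h2 k (by omega)]; exact hk2
      · rw [← h1 k' (by omega)]; exact hk'1
    · -- E = C ∪ U
      ext p
      simp only [hmemE, Set.mem_union, Set.mem_setOf_eq, Set.mem_iUnion]
      constructor
      · intro hp
        by_cases hC : ∃ k, (∀ j, j < k → p.2 j = p.1 j) ∧ p.1 k = true ∧ p.2 k = false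
        · right
          obtain ⟨k, hag, hk1, hk2⟩ := hC
          by_cases hk' : ∃ k', k < k' ∧ p.1 k' = true
          · obtain ⟨k', h1, h2⟩ := hk'
            exact ⟨k, k', h1, hag, hk1, hk2, h2⟩
          · push_neg at hk'
            refine absurd ⟨k, hk1, fun j hj => ?_, hag, hk2⟩ hp
            have := hk' j hj
            revert this; cases p.1 j <;> simp
        · left; exact hC
      · rintro (hC | ⟨k, k', hkk', hag, hk1, hk2, hk'1⟩)
        · rintro ⟨m, hm1, hm2, hm3, hm4⟩
          exact hC ⟨m, hm3, hm1, hm4⟩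
        · rintro ⟨m, hm1, hm2, hm3, hm4⟩
          rcases lt_trichotomy m k with h | h | h
          · have hthis := hag m h
            rw [hm4, hm1] at hthis
            exact absurd hthis (by simp)
          · subst h
            have := hm2 k' hkk'
            rw [this] at hk'1
            exact absurd hk'1 (by simp)
          · have hthis := hm3 k h
            rw [hk2, hk1] at hthis
            exact absurd hthis (by simp)
  · -- sections clopen
    intro x
    by_cases hx : ∃ k, x k = true ∧ ∀ j, k < j → x j = false
    · obtain ⟨k, hk1, hk2⟩ := hx
      have := cyl_clopen (k + 1) (fun y => (x, y) ∈ E) ?_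
      · exact this
      intro y z hyz hy
      rintro ⟨m, hm1, hm2, hm3, hm4⟩
      have hmk : m = k := last_unique hm1 hm2 hk1 hk2
      subst hmk
      refine hy ⟨m, hm1, hm2, fun j hj => ?_, ?_⟩
      · show y j = x j
        rw [hyz j (by omega)]; exact hm3 j hj
      · show y m = false
        rw [hyz m (by omega)]; exact hm4
    · have huniv : {y : ℕ → Bool | (x, y) ∈ E} = Set.univ := by
        ext y
        simp only [Set.mem_setOf_eq, Set.mem_univ, iff_true, hmemE]
        rintro ⟨m, hm1, hm2, _, _⟩
        exact hx ⟨m, hm1, hm2⟩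
      rw [huniv]
      exact isClopen_univ
  · -- not sigma closed rectangles
    rintro ⟨F, S, hFcl, hEF⟩
    have hdiag : ∀ x : ℕ → Bool, (x, x) ∈ E := by
      intro x
      rintro ⟨k, h1, _, _, h4⟩
      have h1' : x k = true := h1
      have h4' : x k = false := h4
      rw [h1'] at h4'
      exact absurd h4' (by simp)
    have hclo : ∀ x : ℕ → Bool, (∀ p, ∃ K, p ≤ K ∧ x K = false) →
        x ∈ closure {x' : ℕ → Bool | (x', x) ∉ E} := by
      intro x hx
      rw [mem_closure_iff]
      intro O hO hxO
      obtain ⟨p, hp⟩ := exists_cyl hO hxO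
      obtain ⟨K, hpK, hK⟩ := hx p
      set x' : ℕ → Bool := fun j => if j < K then x j else if j = K then true else false
        with hx'def
      have hx'O : x' ∈ O := by
        apply hp
        intro j hj
        have : j < K := lt_of_lt_of_le hj hpK
        simp [hx'def, this]
      refine ⟨x', hx'O, ?_⟩
      simp only [Set.mem_setOf_eq, hmemE, not_not]
      refine ⟨K, ?_, ?_, ?_, hK⟩
      · simp [hx'def]
      · intro j hj
        have h1 : ¬ j < K := by omega
        have h2 : ¬ j = K := by omega
        simp [hx'def, h1, h2]
      · intro j hj
        simp [hx'def, hj]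
    have hcover : (Set.univ : Set (ℕ → Bool)) ⊆
        (⋃ n, frontier (F n)) ∪ (⋃ p, {x : ℕ → Bool | ∀ K, p ≤ K → x K = true}) := by
      intro x _
      by_cases hx : ∀ p, ∃ K, p ≤ K ∧ x K = false
      · left
        have hxE := hdiag x
        rw [hEF] at hxE
        obtain ⟨n, hn⟩ := Set.mem_iUnion.mp hxE
        obtain ⟨hxF, hxS⟩ := Set.mem_prod.mp hn
        refine Set.mem_iUnion.mpr ⟨n, ?_⟩
        rw [frontier_eq_closure_inter_closure]
        refine ⟨subset_closure hxF, ?_⟩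
        have hsub : {x' : ℕ → Bool | (x', x) ∉ E} ⊆ (F n)ᶜ := by
          intro x' hx' hxF'
          apply hx'
          rw [hEF]
          exact Set.mem_iUnion.mpr ⟨n, Set.mem_prod.mpr ⟨hxF', hxS⟩⟩
        exact closure_mono hsub (hclo x hx)
      · right
        push_neg at hx
        obtain ⟨p, hp⟩ := hx
        refine Set.mem_iUnion.mpr ⟨p, fun K hK => ?_⟩
        have := hp K hK
        revert this; cases x K <;> simp
    have hm1 : IsMeagre (⋃ n, frontier (F n)) := by
      refine isMeagre_iUnion fun n => ?_
      exact meagre_of_closed_nwd isClosed_frontier (interior_frontier (hFcl n))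
    have hm2 : IsMeagre (⋃ p, {x : ℕ → Bool | ∀ K, p ≤ K → x K = true}) := by
      refine isMeagre_iUnion fun p => ?_
      apply meagre_of_closed_nwd
      · have : {x : ℕ → Bool | ∀ K, p ≤ K → x K = true} =
            ⋂ K, ⋂ (_ : p ≤ K), (fun x : ℕ → Bool => x K) ⁻¹' {true} := by
          ext x; simp [Set.mem_iInter]
        rw [this]
        exact isClosed_iInter fun K => isClosed_iInter fun _ =>
          (isClosed_discrete _).preimage (continuous_apply K)
      · rw [Set.eq_empty_iff_forall_notMem]
        intro x hxint
        obtain ⟨q, hq⟩ := exists_cyl isOpen_interior hxint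
        set y : ℕ → Bool := fun j => if j < q then x j else false with hydef
        have hy : y ∈ interior {x : ℕ → Bool | ∀ K, p ≤ K → x K = true} := by
          apply hq; intro j hj; simp [hydef, hj]
        have hy' := interior_subset hy
        have hfalse := hy' (p + q) (by omega)
        have : ¬ p + q < q := by omega
        simp [hydef, this] at hfalse
    have hmuniv : IsMeagre (Set.univ : Set (ℕ → Bool)) := by
      refine IsMeagre.mono hcover ?_
      rw [IsMeagre, Set.compl_union]
      exact Filter.inter_mem hm1 hm2
    rw [IsMeagre, Set.compl_univ] at hmuniv
    have hdense := dense_of_mem_residual hmuniv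
    obtain ⟨y, hy⟩ := hdense.nonempty
    exact hy
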